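/- Let T : X → Y be a bounded linear operator between Hilbert spaces, y† = Tx†, and for α > 0 let x_α = (T*T + αI)^{-1}(T*y† + αx₀) and x_α^δ = (T*T + αI)^{-1}(T*y^δ + αx₀) with ‖y† - y^δ‖ ≤ δ. Then ‖x† - x_α^δ‖ ≤ ‖x† - x_α‖ + δ/(2√α). -/

import Mathlib

/-- Tikhonov error splitting.  `T : X → Y` bounded between Hilbert spaces,
`y† = T x†`, `‖y† - y^δ‖ ≤ δ`, and `x_α`, `x_α^δ` the Tikhonov regularized
solutions, characterized by the normal equations
`(T*T + αI) x_α = T* y† + α x₀` and `(T*T + αI) x_α^δ = T* y^δ + α x₀`.  Then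
`‖x† - x_α^δ‖ ≤ ‖x† - x_α‖ + δ/(2√α)`. -/
theorem stmt14 {X Y : Type*}
    [NormedAddCommGroup X] [InnerProductSpace ℝ X] [CompleteSpace X]
    [NormedAddCommGroup Y] [InnerProductSpace ℝ Y] [CompleteSpace Y]
    (T : X →L[ℝ] Y) (x0 xdag : X) (ydag ydel : Y) (δ α : ℝ)
    (hα : 0 < α) (hδ : 0 ≤ δ)
    (hy : T xdag = ydag) (hnoise : ‖ydag - ydel‖ ≤ δ)
    (xα xαδ : X)
    (h1 : (ContinuousLinearMap.adjoint T) (T xα) + α • xα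
        = (ContinuousLinearMap.adjoint T) ydag + α • x0)
    (h2 : (ContinuousLinearMap.adjoint T) (T xαδ) + α • xαδ
        = (ContinuousLinearMap.adjoint T) ydel + α • x0) :
    ‖xdag - xαδ‖ ≤ ‖xdag - xα‖ + δ / (2 * Real.sqrt α) := by
  set e := xα - xαδ with he
  have heq : (ContinuousLinearMap.adjoint T) (T e) + α • e
      = (ContinuousLinearMap.adjoint T) (ydag - ydel) := by
    rw [he, map_sub, map_sub, map_sub, smul_sub]
    linear_combination (norm := module) h1 - h2
  have hkey : ‖T e‖ ^ 2 + α * ‖e‖ ^ 2 = inner ℝ (ydag - ydel) (T e) := by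
    have h3 := congrArg (fun z => (inner ℝ z e : ℝ)) heq
    simp only [inner_add_left, real_inner_smul_left,
      ContinuousLinearMap.adjoint_inner_left, real_inner_self_eq_norm_sq] at h3
    rw [← real_inner_self_eq_norm_sq] at h3
    simpa [real_inner_self_eq_norm_sq] using h3
  have hbound : ‖T e‖ ^ 2 + α * ‖e‖ ^ 2 ≤ δ * ‖T e‖ := by
    rw [hkey]
    calc (inner ℝ (ydag - ydel) (T e) : ℝ) ≤ ‖ydag - ydel‖ * ‖T e‖ := real_inner_le_norm _ _
      _ ≤ δ * ‖T e‖ := by gcongr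
  have hsq : α * ‖e‖ ^ 2 ≤ δ ^ 2 / 4 := by nlinarith [sq_nonneg (‖T e‖ - δ / 2)]
  have hsqrt : Real.sqrt α > 0 := Real.sqrt_pos.mpr hα
  have hnorm : ‖e‖ ≤ δ / (2 * Real.sqrt α) := by
    rw [le_div_iff₀ (by positivity)]
    nlinarith [Real.sq_sqrt hα.le, norm_nonneg e, hsqrt.le,
      mul_nonneg (norm_nonneg e) hsqrt.le]
  calc ‖xdag - xαδ‖ = ‖(xdag - xα) + e‖ := by rw [he]; congr 1; abel
    _ ≤ ‖xdag - xα‖ + ‖e‖ := norm_add_le _ _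
    _ ≤ ‖xdag - xα‖ + δ / (2 * Real.sqrt α) := by linarith
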